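/- arXiv:1610.01981 — 4 statements merged into one kernel-verified Lean document; each statement's English description precedes it below -/
import Mathlib

section
/- Let c > 1 and let n be an integer with 1 < n < c and gcd(n,c) = 1. Then the set of k ∈ {1, ..., c−2} with f_n(k) = 1 is exactly { ⌊kc/n⌋ : k = 1, ..., n−1 }. -/
/-- The arithmetic function `f_n(k) = ⌊(k+1)n/c⌋ - ⌊kn/c⌋` (depending on the modulus `c`). -/
noncomputable def fArith (c n k : ℤ) : ℤ :=
  ⌊(((k + 1) * n : ℤ) : ℚ) / (c : ℚ)⌋ - ⌊((k * n : ℤ) : ℚ) / (c : ℚ)⌋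

lemma floor_div_int_eq_iff (x c a : ℤ) (hc : (0:ℤ) < c) :
    ⌊((x : ℤ) : ℚ) / (c : ℚ)⌋ = a ↔ a * c ≤ x ∧ x < (a + 1) * c := by
  have hc' : (0:ℚ) < (c:ℚ) := by exact_mod_cast hc
  rw [Int.floor_eq_iff, le_div_iff₀ hc', div_lt_iff₀ hc']
  constructor <;> rintro ⟨h1, h2⟩ <;>
    exact ⟨by exact_mod_cast h1, by exact_mod_cast h2⟩

/-- For `c > 1` and `1 < n < c` with `gcd(n,c) = 1`, the set of `k ∈ {1, ..., c-2}` with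
`f_n(k) = 1` is exactly `{⌊kc/n⌋ : k = 1, ..., n-1}`. -/
theorem stmt_15 (c n : ℤ) (hc : 1 < c) (hn : 1 < n) (hnc : n < c)
    (hg : Int.gcd n c = 1) :
    {k : ℤ | 1 ≤ k ∧ k ≤ c - 2 ∧ fArith c n k = 1} =
      (fun k : ℤ => ⌊((k * c : ℤ) : ℚ) / (n : ℚ)⌋) '' (Set.Icc 1 (n - 1)) := by
  have hc0 : (0:ℤ) < c := by linarith
  have hn0 : (0:ℤ) < n := by linarith
  ext k
  simp only [Set.mem_setOf_eq, Set.mem_image, Set.mem_Icc]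
  constructor
  · rintro ⟨hk1, hk2, hf⟩
    unfold fArith at hf
    set a := ⌊((k * n : ℤ) : ℚ) / (c : ℚ)⌋ with ha
    have h1 : a * c ≤ k * n ∧ k * n < (a + 1) * c :=
      (floor_div_int_eq_iff _ _ _ hc0).mp ha.symm
    have hf' : ⌊(((k + 1) * n : ℤ) : ℚ) / (c : ℚ)⌋ = a + 1 := by omega
    have h2 : (a + 1) * c ≤ (k + 1) * n ∧ (k + 1) * n < (a + 1 + 1) * c :=
      (floor_div_int_eq_iff _ _ _ hc0).mp hf'
    -- strictness: (a+1)*c ≠ (k+1)*n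
    have hne : (a + 1) * c ≠ (k + 1) * n := by
      intro heq
      have hdvd : c ∣ (k + 1) * n := ⟨a + 1, by linarith [heq]⟩
      have hcop : Int.gcd c n = 1 := by rwa [Int.gcd_comm]
      have hck : c ∣ k + 1 := Int.dvd_of_dvd_mul_left_of_gcd_one hdvd hcop
      have : c ≤ k + 1 := Int.le_of_dvd (by linarith) hck
      linarith
    have hlt : (a + 1) * c < (k + 1) * n := lt_of_le_of_ne h2.1 hne
    refine ⟨a + 1, ⟨?_, ?_⟩, ?_⟩
    · -- 1 ≤ a + 1
      nlinarith [h1.2]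
    · -- a + 1 ≤ n - 1
      nlinarith [hlt]
    · -- ⌊(a+1)*c / n⌋ = k
      exact (floor_div_int_eq_iff _ _ _ hn0).mpr ⟨le_of_lt h1.2, hlt⟩
  · rintro ⟨m, ⟨hm1, hm2⟩, rfl⟩
    set k := ⌊((m * c : ℤ) : ℚ) / (n : ℚ)⌋ with hk
    have hb : k * n ≤ m * c ∧ m * c < (k + 1) * n :=
      (floor_div_int_eq_iff _ _ _ hn0).mp hk.symm
    have hne : k * n ≠ m * c := by
      intro heq
      have hdvd : n ∣ m * c := ⟨k, by linarith [heq]⟩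
      have hnm : n ∣ m := Int.dvd_of_dvd_mul_left_of_gcd_one hdvd hg
      have : n ≤ m := Int.le_of_dvd (by linarith) hnm
      linarith
    have hlt : k * n < m * c := lt_of_le_of_ne hb.1 hne
    refine ⟨?_, ?_, ?_⟩
    · -- 1 ≤ k
      nlinarith [hb.2]
    · -- k ≤ c - 2
      nlinarith [hlt]
    · -- fArith = 1
      unfold fArith
      have e1 : ⌊((k * n : ℤ) : ℚ) / (c : ℚ)⌋ = m - 1 :=
        (floor_div_int_eq_iff _ _ _ hc0).mpr ⟨by nlinarith [hb.2], by nlinarith [hlt]⟩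
      have e2 : ⌊(((k + 1) * n : ℤ) : ℚ) / (c : ℚ)⌋ = m :=
        (floor_div_int_eq_iff _ _ _ hc0).mpr ⟨by nlinarith [hb.2], by nlinarith [hlt]⟩
      rw [e1, e2]; ring
end

section
/- Let c > 1 be an integer, let a, b be integers with 0 ≤ a, b < c, let d = (1−a−b) mod c, and suppose T_{a,b,c} is a clean lattice tetrahedron. Then T_{a,b,c} is empty if and only if a + b + d = c + 1 and f_a(k) + f_b(k) + f_d(k) = 1 for every integer k with 1 ≤ k ≤ c−2. -/
/-- A point of `ℝ³` is a lattice point if all of its coordinates are integers. -/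
def IsLatticePt (x : Fin 3 → ℝ) : Prop := ∀ i, ∃ m : ℤ, x i = (m : ℝ)

/-- The tetrahedron `T_{a,b,c}`: the convex hull of `(0,0,0)`, `(1,0,0)`, `(0,1,0)`, `(a,b,c)`. -/
def Tet (a b c : ℤ) : Set (Fin 3 → ℝ) :=
  convexHull ℝ {![0,0,0], ![1,0,0], ![0,1,0], ![(a : ℝ), (b : ℝ), (c : ℝ)]}

/-- `T_{a,b,c}` is an empty lattice tetrahedron: it contains no point of `ℤ³`
other than its four vertices. -/
def TetIsEmpty (a b c : ℤ) : Prop :=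
  ∀ x ∈ Tet a b c, IsLatticePt x →
    x = ![0,0,0] ∨ x = ![1,0,0] ∨ x = ![0,1,0] ∨ x = ![(a : ℝ), (b : ℝ), (c : ℝ)]

/-- `T_{a,b,c}` is a clean lattice tetrahedron: it contains no point of `ℤ³` on its
boundary other than its four vertices. -/
def TetIsClean (a b c : ℤ) : Prop :=
  ∀ x ∈ frontier (Tet a b c), IsLatticePt x →
    x = ![0,0,0] ∨ x = ![1,0,0] ∨ x = ![0,1,0] ∨ x = ![(a : ℝ), (b : ℝ), (c : ℝ)]

section TetAux

variable {a b c : ℤ}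

lemma lattice_pt (x y k : ℤ) : IsLatticePt ![(x:ℝ), (y:ℝ), (k:ℝ)] := by
  intro i
  fin_cases i
  · exact ⟨x, rfl⟩
  · exact ⟨y, rfl⟩
  · exact ⟨k, rfl⟩

lemma mem_Tet (hc : 0 < c) (p : Fin 3 → ℝ) :
    p ∈ Tet a b c ↔ (0 ≤ p 2 ∧ (a:ℝ) * p 2 ≤ c * p 0 ∧ (b:ℝ) * p 2 ≤ c * p 1 ∧
      (c:ℝ) * (p 0 + p 1) ≤ c + (a + b - 1) * p 2) := by
  have hc0 : (0:ℝ) < (c:ℝ) := by exact_mod_cast hc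
  constructor
  · intro hp
    have hconv : Convex ℝ {q : Fin 3 → ℝ | 0 ≤ q 2 ∧ (a:ℝ) * q 2 ≤ c * q 0 ∧ (b:ℝ) * q 2 ≤ c * q 1 ∧
        (c:ℝ) * (q 0 + q 1) ≤ c + (a + b - 1) * q 2} := by
      intro x hx y hy α β hα hβ hαβ
      simp only [Set.mem_setOf_eq, Pi.add_apply, Pi.smul_apply, smul_eq_mul] at *
      obtain ⟨hx1, hx2, hx3, hx4⟩ := hx
      obtain ⟨hy1, hy2, hy3, hy4⟩ := hy
      refine ⟨by nlinarith, by nlinarith, by nlinarith, by nlinarith⟩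
    have hsub : Tet a b c ⊆ _ := convexHull_min ?_ hconv
    · exact hsub hp
    · intro q hq
      simp only [Set.mem_insert_iff, Set.mem_singleton_iff] at hq
      have hc1 : (1:ℝ) ≤ (c:ℝ) := by exact_mod_cast hc
      rcases hq with rfl | rfl | rfl | rfl <;>
        refine ⟨?_, ?_, ?_, ?_⟩ <;>
        simp only [Set.mem_setOf_eq, Matrix.cons_val_zero, Matrix.cons_val_one, Matrix.head_cons,
          Matrix.cons_val_two, Matrix.tail_cons] <;>
        nlinarith [hc0, hc1]
  · rintro ⟨h1, h2, h3, h4⟩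
    classical
    set v : Fin 4 → (Fin 3 → ℝ) := ![![0,0,0], ![1,0,0], ![0,1,0], ![(a : ℝ), (b : ℝ), (c : ℝ)]]
      with hv
    set w : Fin 4 → ℝ := ![((c:ℝ) + (a + b - 1) * p 2 - c * (p 0 + p 1))/c,
      ((c:ℝ) * p 0 - a * p 2)/c, ((c:ℝ) * p 1 - b * p 2)/c, p 2 / c] with hw
    have hw0 : ∀ i ∈ Finset.univ, 0 ≤ w i := by
      intro i _
      fin_cases i <;> exact div_nonneg (by linarith) hc0.le
    have hsum : ∑ i, w i = 1 := by
      simp only [hw, Fin.sum_univ_four, Matrix.cons_val_zero, Matrix.cons_val_one,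
        Matrix.head_cons, Matrix.cons_val_two, Matrix.tail_cons, Matrix.cons_val_three]
      field_simp
      ring
    have hmem : ∀ i ∈ Finset.univ, v i ∈
        ({![0,0,0], ![1,0,0], ![0,1,0], ![(a : ℝ), (b : ℝ), (c : ℝ)]} : Set (Fin 3 → ℝ)) := by
      intro i _
      fin_cases i <;> simp [hv]
    have hcm := Finset.centerMass_mem_convexHull Finset.univ hw0 (by rw [hsum]; norm_num) hmem
    rw [Finset.centerMass_eq_of_sum_1 _ _ hsum] at hcm
    have hp : p = ∑ i, w i • v i := by
      funext j
      have : (∑ i, w i • v i) j = ∑ i, w i * v i j := by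
        simp [Finset.sum_apply]
      rw [this]
      fin_cases j <;>
        simp only [hw, hv, Fin.sum_univ_four, Matrix.cons_val_zero, Matrix.cons_val_one,
          Matrix.head_cons, Matrix.cons_val_two, Matrix.tail_cons, Matrix.cons_val_three, Fin.zero_eta, Fin.mk_one, Fin.reduceFinMk] <;>
        field_simp <;> ring_nf <;> try rfl
    rw [Tet]
    rw [hp]
    exact hcm

lemma mem_interior_Tet (hc : 0 < c) (p : Fin 3 → ℝ) :
    p ∈ interior (Tet a b c) ↔ (0 < p 2 ∧ (a:ℝ) * p 2 < c * p 0 ∧ (b:ℝ) * p 2 < c * p 1 ∧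
      (c:ℝ) * (p 0 + p 1) < c + (a + b - 1) * p 2) := by
  have hc0 : (0:ℝ) < (c:ℝ) := by exact_mod_cast hc
  constructor
  · intro hp
    obtain ⟨ε, hε, hball⟩ := Metric.isOpen_iff.1 isOpen_interior p hp
    have hball' : Metric.ball p ε ⊆ Tet a b c := hball.trans interior_subset
    have hq : ∀ i : Fin 3, ∀ s : ℝ, |s| < ε → Function.update p i (p i + s) ∈ Tet a b c := by
      intro i s hs
      apply hball'
      rw [Metric.mem_ball, dist_pi_lt_iff (lt_of_le_of_lt (abs_nonneg s) hs)]
      intro j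
      rcases eq_or_ne j i with rfl | hji
      · simpa [Real.dist_eq] using hs
      · simp [Function.update_of_ne hji, Real.dist_eq, lt_of_le_of_lt (abs_nonneg s) hs]
    have key : ∀ i : Fin 3, ∀ s : ℝ, |s| < ε →
        (0 ≤ (Function.update p i (p i + s)) 2 ∧
         (a:ℝ) * (Function.update p i (p i + s)) 2 ≤ c * (Function.update p i (p i + s)) 0 ∧
         (b:ℝ) * (Function.update p i (p i + s)) 2 ≤ c * (Function.update p i (p i + s)) 1 ∧
         (c:ℝ) * ((Function.update p i (p i + s)) 0 + (Function.update p i (p i + s)) 1) ≤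
           c + (a + b - 1) * (Function.update p i (p i + s)) 2) := by
      intro i s hs
      exact (mem_Tet hc _).1 (hq i s hs)
    have hε2 : |(-(ε/2))| < ε := by rw [abs_neg, abs_of_pos (by linarith)]; linarith
    have hε2' : |(ε/2)| < ε := by rw [abs_of_pos (by linarith)]; linarith
    have k2 := key 2 (-(ε/2)) hε2
    have k0 := key 0 (-(ε/2)) hε2
    have k1 := key 1 (-(ε/2)) hε2
    have k0' := key 0 (ε/2) hε2'
    simp only [Function.update_self, Function.update_of_ne (by decide : (0:Fin 3) ≠ 2),
      Function.update_of_ne (by decide : (1:Fin 3) ≠ 2),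
      Function.update_of_ne (by decide : (2:Fin 3) ≠ 0),
      Function.update_of_ne (by decide : (1:Fin 3) ≠ 0),
      Function.update_of_ne (by decide : (2:Fin 3) ≠ 1),
      Function.update_of_ne (by decide : (0:Fin 3) ≠ 1)] at k2 k0 k1 k0'
    refine ⟨by linarith [k2.1], ?_, ?_, ?_⟩
    · nlinarith [k0.2.1, abs_nonneg (a:ℝ)]
    · nlinarith [k1.2.2.1]
    · nlinarith [k0'.2.2.2]
  · rintro ⟨h1, h2, h3, h4⟩
    have hopen : IsOpen {q : Fin 3 → ℝ | 0 < q 2 ∧ (a:ℝ) * q 2 < c * q 0 ∧ (b:ℝ) * q 2 < c * q 1 ∧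
        (c:ℝ) * (q 0 + q 1) < c + (a + b - 1) * q 2} := by
      have c2 : Continuous fun q : Fin 3 → ℝ => q 2 := continuous_apply 2
      have c0 : Continuous fun q : Fin 3 → ℝ => q 0 := continuous_apply 0
      have c1 : Continuous fun q : Fin 3 → ℝ => q 1 := continuous_apply 1
      refine IsOpen.inter (isOpen_lt continuous_const c2) ?_
      refine IsOpen.inter (isOpen_lt (continuous_const.mul c2) (continuous_const.mul c0)) ?_
      refine IsOpen.inter (isOpen_lt (continuous_const.mul c2) (continuous_const.mul c1)) ?_
      exact isOpen_lt (continuous_const.mul (c0.add c1))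
        (continuous_const.add (continuous_const.mul c2))
    have hsub : {q : Fin 3 → ℝ | 0 < q 2 ∧ (a:ℝ) * q 2 < c * q 0 ∧ (b:ℝ) * q 2 < c * q 1 ∧
        (c:ℝ) * (q 0 + q 1) < c + (a + b - 1) * q 2} ⊆ Tet a b c := by
      intro q hq
      exact (mem_Tet hc q).2 ⟨hq.1.le, hq.2.1.le, hq.2.2.1.le, hq.2.2.2.le⟩
    exact interior_maximal hsub hopen ⟨h1, h2, h3, h4⟩

lemma vertex_cases (hc : 1 < c) {k x y : ℤ} (hk1 : 1 ≤ k) (hk2 : k ≤ c - 1)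
    (h : (![(x:ℝ), (y:ℝ), (k:ℝ)]) = ![0,0,0] ∨ (![(x:ℝ), (y:ℝ), (k:ℝ)]) = ![1,0,0] ∨
      (![(x:ℝ), (y:ℝ), (k:ℝ)]) = ![0,1,0] ∨
      (![(x:ℝ), (y:ℝ), (k:ℝ)]) = ![(a : ℝ), (b : ℝ), (c : ℝ)]) : False := by
  have h2 : (![(x:ℝ), (y:ℝ), (k:ℝ)]) 2 = (k:ℝ) := rfl
  rcases h with h | h | h | h <;>
    rw [h] at h2 <;> simp only [Matrix.cons_val_two, Matrix.tail_cons, Matrix.head_cons] at h2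
  · have : k = 0 := by exact_mod_cast h2.symm
    omega
  · have : k = 0 := by exact_mod_cast h2.symm
    omega
  · have : k = 0 := by exact_mod_cast h2.symm
    omega
  · have : k = c := by exact_mod_cast h2.symm
    omega

lemma clean_contra (hc : 1 < c) {k x y : ℤ} (hk1 : 1 ≤ k) (hk2 : k ≤ c - 1)
    (hin : (![(x:ℝ), (y:ℝ), (k:ℝ)]) ∈ Tet a b c)
    (hni : (![(x:ℝ), (y:ℝ), (k:ℝ)]) ∉ interior (Tet a b c))
    (hclean : TetIsClean a b c) : False := by
  have hfr : (![(x:ℝ), (y:ℝ), (k:ℝ)]) ∈ frontier (Tet a b c) := by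
    rw [frontier]
    exact ⟨subset_closure hin, hni⟩
  exact vertex_cases hc hk1 hk2 (hclean _ hfr (lattice_pt x y k))

end TetAux

lemma face_contra {a b c : ℤ} (hc : 1 < c) (k x y : ℤ) (hk1 : 1 ≤ k) (hk2 : k ≤ c - 1)
    (h2 : a*k ≤ c*x) (h3 : b*k ≤ c*y) (h4 : c*(x+y) ≤ c + (a+b-1)*k)
    (heq : a*k = c*x ∨ b*k = c*y ∨ c*(x+y) = c + (a+b-1)*k)
    (hclean : TetIsClean a b c) : False := by
  have hc0 : 0 < c := by omega
  apply clean_contra (x := x) (y := y) hc hk1 hk2 ?_ ?_ hclean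
  · rw [mem_Tet hc0]
    simp only [Matrix.cons_val_zero, Matrix.cons_val_one, Matrix.head_cons,
      Matrix.cons_val_two, Matrix.tail_cons]
    refine ⟨by positivity, by exact_mod_cast h2, by exact_mod_cast h3, by exact_mod_cast h4⟩
  · rw [mem_interior_Tet hc0]
    simp only [Matrix.cons_val_zero, Matrix.cons_val_one, Matrix.head_cons,
      Matrix.cons_val_two, Matrix.tail_cons]
    rintro ⟨-, s2, s3, s4⟩
    have s2' : a*k < c*x := by exact_mod_cast s2
    have s3' : b*k < c*y := by exact_mod_cast s3
    have s4' : c*(x+y) < c + (a+b-1)*k := by exact_mod_cast s4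
    rcases heq with h | h | h <;> linarith

lemma clean_a_case {a b c : ℤ} (hc : 1 < c) {k qa : ℤ} (hk1 : 1 ≤ k) (hk2 : k ≤ c - 1)
    (hqa : a*k = c*qa) (hcase : b*k % c = 0 ∨ k ≤ b*k % c)
    (hclean : TetIsClean a b c) : False := by
  have hc0 : 0 < c := by omega
  have hbk : b*k = c*(b*k/c) + b*k % c := (Int.mul_ediv_add_emod _ _).symm
  have hr0 : 0 ≤ b*k % c := Int.emod_nonneg _ (by omega)
  have hrc : b*k % c < c := Int.emod_lt_of_pos _ hc0
  rcases hcase with h | h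
  · refine face_contra hc k qa (b*k/c) hk1 hk2 hqa.le (by linarith) ?_ (Or.inl hqa) hclean
    have e1 : c*(qa + b*k/c) = c*qa + c*(b*k/c) := by ring
    linarith
  · refine face_contra hc k qa (b*k/c + 1) hk1 hk2 hqa.le ?_ ?_ (Or.inl hqa) hclean
    · have e1 : c*(b*k/c + 1) = c*(b*k/c) + c := by ring
      linarith
    · have e1 : c*(qa + (b*k/c + 1)) = c*qa + c*(b*k/c) + c := by ring
      linarith

lemma clean_a {a b c : ℤ} (hc : 1 < c) (hclean : TetIsClean a b c) :
    ∀ k, 1 ≤ k → k ≤ c - 1 → ¬ (c ∣ a*k) := by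
  intro k hk1 hk2 hdvd
  obtain ⟨qa, hqa⟩ := hdvd
  by_cases hcase : b*k % c = 0 ∨ k ≤ b*k % c
  · exact clean_a_case hc hk1 hk2 hqa hcase hclean
  · push_neg at hcase
    obtain ⟨hr, hrk⟩ := hcase
    have hr0 : 0 ≤ b*k % c := Int.emod_nonneg _ (by omega)
    have hbk : b*k = c*(b*k/c) + b*k % c := (Int.mul_ediv_add_emod _ _).symm
    have hqa' : a*(c-k) = c*(a - qa) := by
      have : a*(c-k) = a*c - a*k := by ring
      rw [this, hqa]; ring
    have hbk' : b*(c-k) % c = c - b*k % c := by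
      have h1 : b*(c-k) = (c - b*k % c) + c*(b - b*k/c - 1) := by
        have e1 : b*(c-k) = b*c - b*k := by ring
        have e2 : c*(b - b*k/c - 1) = c*b - c*(b*k/c) - c := by ring
        linarith
      rw [h1, Int.add_mul_emod_self_left]
      exact Int.emod_eq_of_lt (by omega) (by omega)
    refine clean_a_case hc (k := c - k) (by omega) (by omega) hqa' ?_ hclean
    right
    rw [hbk']
    omega

lemma clean_b_case {a b c : ℤ} (hc : 1 < c) {k qb : ℤ} (hk1 : 1 ≤ k) (hk2 : k ≤ c - 1)
    (hqb : b*k = c*qb) (hcase : a*k % c = 0 ∨ k ≤ a*k % c)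
    (hclean : TetIsClean a b c) : False := by
  have hc0 : 0 < c := by omega
  have hak : a*k = c*(a*k/c) + a*k % c := (Int.mul_ediv_add_emod _ _).symm
  have hr0 : 0 ≤ a*k % c := Int.emod_nonneg _ (by omega)
  have hrc : a*k % c < c := Int.emod_lt_of_pos _ hc0
  rcases hcase with h | h
  · refine face_contra hc k (a*k/c) qb hk1 hk2 (by linarith) hqb.le ?_
      (Or.inr (Or.inl hqb)) hclean
    have e1 : c*(a*k/c + qb) = c*(a*k/c) + c*qb := by ring
    linarith
  · refine face_contra hc k (a*k/c + 1) qb hk1 hk2 ?_ hqb.le ?_ (Or.inr (Or.inl hqb)) hclean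
    · have e1 : c*(a*k/c + 1) = c*(a*k/c) + c := by ring
      linarith
    · have e1 : c*((a*k/c + 1) + qb) = c*(a*k/c) + c*qb + c := by ring
      linarith

lemma clean_b {a b c : ℤ} (hc : 1 < c) (hclean : TetIsClean a b c) :
    ∀ k, 1 ≤ k → k ≤ c - 1 → ¬ (c ∣ b*k) := by
  intro k hk1 hk2 hdvd
  obtain ⟨qb, hqb⟩ := hdvd
  by_cases hcase : a*k % c = 0 ∨ k ≤ a*k % c
  · exact clean_b_case hc hk1 hk2 hqb hcase hclean
  · push_neg at hcase
    obtain ⟨hr, hrk⟩ := hcase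
    have hr0 : 0 ≤ a*k % c := Int.emod_nonneg _ (by omega)
    have hak : a*k = c*(a*k/c) + a*k % c := (Int.mul_ediv_add_emod _ _).symm
    have hqb' : b*(c-k) = c*(b - qb) := by
      have : b*(c-k) = b*c - b*k := by ring
      rw [this, hqb]; ring
    have hak' : a*(c-k) % c = c - a*k % c := by
      have h1 : a*(c-k) = (c - a*k % c) + c*(a - a*k/c - 1) := by
        have e1 : a*(c-k) = a*c - a*k := by ring
        have e2 : c*(a - a*k/c - 1) = c*a - c*(a*k/c) - c := by ring
        linarith
      rw [h1, Int.add_mul_emod_self_left]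
      exact Int.emod_eq_of_lt (by omega) (by omega)
    refine clean_b_case hc (k := c - k) (by omega) (by omega) hqb' ?_ hclean
    right
    rw [hak']
    omega

lemma clean_s_case {a b c : ℤ} (hc : 1 < c) {k s : ℤ} (hk1 : 1 ≤ k) (hk2 : k ≤ c - 1)
    (hs : c*s = c + (a+b-1)*k) (hcase : a*k % c = 0 ∨ k ≤ a*k % c)
    (hclean : TetIsClean a b c) : False := by
  have hc0 : 0 < c := by omega
  have hak : a*k = c*(a*k/c) + a*k % c := (Int.mul_ediv_add_emod _ _).symm
  have hr0 : 0 ≤ a*k % c := Int.emod_nonneg _ (by omega)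
  have hrc : a*k % c < c := Int.emod_lt_of_pos _ hc0
  rcases hcase with h | h
  · refine face_contra hc k (a*k/c) (s - a*k/c) hk1 hk2 (by linarith) ?_ ?_
      (Or.inr (Or.inr ?_)) hclean
    · have e1 : c*(s - a*k/c) = c*s - c*(a*k/c) := by ring
      linarith
    · have e1 : c*(a*k/c + (s - a*k/c)) = c*s := by ring
      linarith
    · have e1 : c*(a*k/c + (s - a*k/c)) = c*s := by ring
      linarith
  · refine face_contra hc k (a*k/c + 1) (s - a*k/c - 1) hk1 hk2 ?_ ?_ ?_
      (Or.inr (Or.inr ?_)) hclean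
    · have e1 : c*(a*k/c + 1) = c*(a*k/c) + c := by ring
      linarith
    · have e1 : c*(s - a*k/c - 1) = c*s - c*(a*k/c) - c := by ring
      linarith
    · have e1 : c*((a*k/c + 1) + (s - a*k/c - 1)) = c*s := by ring
      linarith
    · have e1 : c*((a*k/c + 1) + (s - a*k/c - 1)) = c*s := by ring
      linarith

lemma clean_s {a b c : ℤ} (hc : 1 < c) (hclean : TetIsClean a b c) :
    ∀ k, 1 ≤ k → k ≤ c - 1 → ¬ (c ∣ (a+b-1)*k) := by
  intro k hk1 hk2 hdvd
  obtain ⟨t, ht⟩ := hdvd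
  have hs : c*(t+1) = c + (a+b-1)*k := by rw [mul_add, ← ht]; ring
  by_cases hcase : a*k % c = 0 ∨ k ≤ a*k % c
  · exact clean_s_case hc hk1 hk2 hs hcase hclean
  · push_neg at hcase
    obtain ⟨hr, hrk⟩ := hcase
    have hr0 : 0 ≤ a*k % c := Int.emod_nonneg _ (by omega)
    have hak : a*k = c*(a*k/c) + a*k % c := (Int.mul_ediv_add_emod _ _).symm
    have hs' : c*(a+b-1-t+1) = c + (a+b-1)*(c-k) := by
      have e1 : (a+b-1)*(c-k) = (a+b-1)*c - (a+b-1)*k := by ring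
      have e2 : c*(a+b-1-t+1) = c*(a+b-1) - c*t + c := by ring
      have e3 : c*(a+b-1) = (a+b-1)*c := by ring
      linarith
    have hak' : a*(c-k) % c = c - a*k % c := by
      have h1 : a*(c-k) = (c - a*k % c) + c*(a - a*k/c - 1) := by
        have e1 : a*(c-k) = a*c - a*k := by ring
        have e2 : c*(a - a*k/c - 1) = c*a - c*(a*k/c) - c := by ring
        linarith
      rw [h1, Int.add_mul_emod_self_left]
      exact Int.emod_eq_of_lt (by omega) (by omega)
    refine clean_s_case hc (k := c - k) (by omega) (by omega) hs' ?_ hclean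
    right
    rw [hak']
    omega

lemma floor_int_div {c : ℤ} (hc : 0 < c) (m : ℤ) : ⌊((m : ℚ)) / (c : ℚ)⌋ = m / c := by
  have h1 : ((c.toNat : ℕ) : ℚ) = (c : ℚ) := by
    exact_mod_cast congrArg (Int.cast : ℤ → ℚ) (Int.toNat_of_nonneg hc.le)
  rw [← h1, Rat.floor_intCast_div_natCast]
  simp [Int.toNat_of_nonneg hc.le]

lemma fArith_eq {c : ℤ} (hc : 0 < c) (n k : ℤ) :
    fArith c n k = (n*(k+1)) / c - (n*k) / c := by
  rw [fArith, floor_int_div hc, floor_int_div hc, mul_comm (k+1) n, mul_comm k n]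

lemma mod_compl {c n k : ℤ} (hc : 0 < c) (h : n*k % c ≠ 0) :
    n*(c-k) % c = c - n*k % c := by
  have hnk : n*k = c*(n*k/c) + n*k % c := (Int.mul_ediv_add_emod _ _).symm
  have hr0 : 0 ≤ n*k % c := Int.emod_nonneg _ (by omega)
  have hrc : n*k % c < c := Int.emod_lt_of_pos _ hc
  have h1 : n*(c-k) = (c - n*k % c) + c*(n - n*k/c - 1) := by
    have e1 : n*(c-k) = n*c - n*k := by ring
    have e2 : c*(n - n*k/c - 1) = c*n - c*(n*k/c) - c := by ring
    linarith
  rw [h1, Int.add_mul_emod_self_left]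
  exact Int.emod_eq_of_lt (by omega) (by omega)

lemma key_nt (a b c d : ℤ) (hc : 1 < c) (ha : 0 ≤ a) (hac : a < c) (hb : 0 ≤ b)
    (hbc : b < c) (hd : d = (1 - a - b) % c)
    (hA : ∀ k, 1 ≤ k → k ≤ c-1 → a*k % c ≠ 0)
    (hB : ∀ k, 1 ≤ k → k ≤ c-1 → b*k % c ≠ 0)
    (hD : ∀ k, 1 ≤ k → k ≤ c-1 → d*k % c ≠ 0) :
    (∀ k, 1 ≤ k → k ≤ c-1 → a*k % c + b*k % c ≤ c + k) ↔
    (a + b + d = c + 1 ∧ ∀ k, 1 ≤ k → k ≤ c-2 →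
      fArith c a k + fArith c b k + fArith c d k = 1) := by
  have hc0 : 0 < c := by omega
  have hd0 : 0 ≤ d := hd ▸ Int.emod_nonneg _ (by omega)
  have hdc : d < c := hd ▸ Int.emod_lt_of_pos _ hc0
  have ha1 : 1 ≤ a := by
    have := hA 1 le_rfl (by omega)
    rw [mul_one, Int.emod_eq_of_lt ha hac] at this
    omega
  have hb1 : 1 ≤ b := by
    have := hB 1 le_rfl (by omega)
    rw [mul_one, Int.emod_eq_of_lt hb hbc] at this
    omega
  have hd1 : 1 ≤ d := by
    have := hD 1 le_rfl (by omega)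
    rw [mul_one, Int.emod_eq_of_lt hd0 hdc] at this
    omega
  -- c ∣ a+b+d-1
  obtain ⟨q, hq⟩ : ∃ q, a+b+d-1 = c*q := by
    have e := Int.emod_add_mul_ediv (1-a-b) c
    exact ⟨-((1-a-b)/c), by rw [hd]; linarith [mul_neg c ((1-a-b)/c)]⟩
  -- the master identity
  have master : ∀ k : ℤ, k*(a+b+d) =
      c*((a*k)/c + (b*k)/c + (d*k)/c) + (a*k % c + b*k % c + d*k % c) := by
    intro k
    have e1 : a*k = c*((a*k)/c) + a*k % c := (Int.mul_ediv_add_emod _ _).symm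
    have e2 : b*k = c*((b*k)/c) + b*k % c := (Int.mul_ediv_add_emod _ _).symm
    have e3 : d*k = c*((d*k)/c) + d*k % c := (Int.mul_ediv_add_emod _ _).symm
    have e4 : k*(a+b+d) = a*k + b*k + d*k := by ring
    have e5 : c*((a*k)/c + (b*k)/c + (d*k)/c)
        = c*((a*k)/c) + c*((b*k)/c) + c*((d*k)/c) := by ring
    linarith
  constructor
  · intro hk
    -- first: a+b+d = c+1
    have habd : a + b + d = c + 1 := by
      have h1 := hk 1 le_rfl (by omega)
      rw [mul_one, mul_one, Int.emod_eq_of_lt ha hac, Int.emod_eq_of_lt hb hbc] at h1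
      have hq1 : 1 ≤ q := by nlinarith
      have hq2 : q < 3 := by nlinarith
      interval_cases q <;> omega
    refine ⟨habd, ?_⟩
    -- rsum k = k + c for all k in [1,c-1]
    have rsum : ∀ k, 1 ≤ k → k ≤ c-1 → a*k % c + b*k % c + d*k % c = k + c := by
      intro k hk1 hk2
      have hra := hA k hk1 hk2
      have hrb := hB k hk1 hk2
      have hrd := hD k hk1 hk2
      have hra0 : 0 ≤ a*k % c := Int.emod_nonneg _ (by omega)
      have hrb0 : 0 ≤ b*k % c := Int.emod_nonneg _ (by omega)
      have hrd0 : 0 ≤ d*k % c := Int.emod_nonneg _ (by omega)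
      have hrac : a*k % c < c := Int.emod_lt_of_pos _ hc0
      have hrbc : b*k % c < c := Int.emod_lt_of_pos _ hc0
      have hrdc : d*k % c < c := Int.emod_lt_of_pos _ hc0
      have hm := master k
      rw [habd] at hm
      set S := (a*k)/c + (b*k)/c + (d*k)/c with hS
      set rs := a*k % c + b*k % c + d*k % c with hrs
      -- rs = k + c*(k - S)
      have e1 : rs = k + c*(k - S) := by
        have : k*(c+1) = k*c + k := by ring
        have e2 : c*(k - S) = c*k - c*S := by ring
        have e3 : k*c = c*k := by ring
        linarith
      set t := k - S with ht
      have ht0 : 0 ≤ t := by nlinarith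
      have ht3 : t < 3 := by nlinarith
      interval_cases t
      · -- rs = k : contradiction via c - k
        exfalso
        have hra' := mod_compl hc0 hra
        have hrb' := mod_compl hc0 hrb
        have hrd' := mod_compl hc0 hrd
        have hk' := hk (c-k) (by omega) (by omega)
        have hrd'c : d*(c-k) % c < c := Int.emod_lt_of_pos _ hc0
        omega
      · omega
      · -- rs = k + 2c : contradiction with hk k
        exfalso
        have := hk k hk1 hk2
        omega
    -- now compute fArith sums
    intro k hk1 hk2
    have hSk : ∀ j, 1 ≤ j → j ≤ c-1 → (a*j)/c + (b*j)/c + (d*j)/c = j - 1 := by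
      intro j hj1 hj2
      have hm := master j
      rw [habd] at hm
      have hr := rsum j hj1 hj2
      have : c*((a*j)/c + (b*j)/c + (d*j)/c) = c*(j-1) := by
        have e : j*(c+1) = c*j + j := by ring
        have e2 : c*(j-1) = c*j - c := by ring
        linarith
      exact mul_left_cancel₀ (by omega) this
    rw [fArith_eq hc0, fArith_eq hc0, fArith_eq hc0]
    have h1 := hSk k hk1 (by omega)
    have h2 := hSk (k+1) (by omega) (by omega)
    omega
  · rintro ⟨habd, hf⟩
    -- by induction: rsum k = k + c
    have rsum : ∀ k, 1 ≤ k → k ≤ c-1 → a*k % c + b*k % c + d*k % c = k + c := by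
      refine fun k hk1 => Int.le_induction (motive := fun k _ => k ≤ c-1 → a*k % c + b*k % c + d*k % c = k + c) ?_ ?_ k hk1
      · intro _
        rw [mul_one, mul_one, mul_one, Int.emod_eq_of_lt ha hac,
          Int.emod_eq_of_lt hb hbc, Int.emod_eq_of_lt hd0 hdc]
        omega
      · intro k hk ih hk2
        have ihk := ih (by omega)
        have hmk := master k
        have hmk1 := master (k+1)
        rw [habd] at hmk hmk1
        have hSk : c*((a*k)/c + (b*k)/c + (d*k)/c) = c*(k-1) := by
          have e : k*(c+1) = c*k + k := by ring
          have e2 : c*(k-1) = c*k - c := by ring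
          linarith
        have hSk' : (a*k)/c + (b*k)/c + (d*k)/c = k - 1 :=
          mul_left_cancel₀ (by omega : (c:ℤ) ≠ 0) hSk
        have hfk := hf k hk (by omega)
        rw [fArith_eq hc0, fArith_eq hc0, fArith_eq hc0] at hfk
        have hSk1 : (a*(k+1))/c + (b*(k+1))/c + (d*(k+1))/c = k := by omega
        have e : (k+1)*(c+1) = c*(k+1) + (k+1) := by ring
        have e2 : c*((a*(k+1))/c + (b*(k+1))/c + (d*(k+1))/c) = c*k := by rw [hSk1]
        linarith
    intro k hk1 hk2
    have hr := rsum k hk1 hk2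
    have hrd0 : 0 ≤ d*k % c := Int.emod_nonneg _ (by omega)
    omega

/-- Let `c > 1`, `0 ≤ a, b < c`, `d = (1 - a - b) mod c`, and suppose `T_{a,b,c}` is a
clean lattice tetrahedron. Then `T_{a,b,c}` is empty if and only if `a + b + d = c + 1` and
`f_a(k) + f_b(k) + f_d(k) = 1` for every integer `k` with `1 ≤ k ≤ c - 2`. -/
theorem stmt_17 (a b c d : ℤ) (hc : 1 < c) (ha : 0 ≤ a) (hac : a < c) (hb : 0 ≤ b)
    (hbc : b < c) (hd : d = (1 - a - b) % c) (hclean : TetIsClean a b c) :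
    TetIsEmpty a b c ↔
      (a + b + d = c + 1 ∧
        ∀ k : ℤ, 1 ≤ k → k ≤ c - 2 →
          fArith c a k + fArith c b k + fArith c d k = 1) := by
  have hc0 : 0 < c := by omega
  obtain ⟨q, hq⟩ : ∃ q, a + b + d - 1 = c * q := by
    refine ⟨-((1 - a - b)/c), ?_⟩
    have := Int.emod_add_mul_ediv (1 - a - b) c
    have e : c * -((1-a-b)/c) = -(c * ((1-a-b)/c)) := by ring
    rw [hd]
    linarith
  have hA : ∀ k, 1 ≤ k → k ≤ c-1 → a*k % c ≠ 0 := fun k h1 h2 h =>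
    clean_a hc hclean k h1 h2 (Int.dvd_of_emod_eq_zero h)
  have hB : ∀ k, 1 ≤ k → k ≤ c-1 → b*k % c ≠ 0 := fun k h1 h2 h =>
    clean_b hc hclean k h1 h2 (Int.dvd_of_emod_eq_zero h)
  have hD : ∀ k, 1 ≤ k → k ≤ c-1 → d*k % c ≠ 0 := by
    intro k h1 h2 h
    apply clean_s hc hclean k h1 h2
    have h' : c ∣ d*k := Int.dvd_of_emod_eq_zero h
    have e : (a+b-1)*k = (a+b+d-1)*k - d*k := by ring
    rw [e, hq]
    exact dvd_sub ⟨q*k, by ring⟩ h'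
  rw [← key_nt a b c d hc ha hac hb hbc hd hA hB hD]
  constructor
  · -- Empty implies the residue condition
    intro hemp k hk1 hk2
    by_contra hcon
    push_neg at hcon
    have hra : a*k = c*(a*k/c) + a*k % c := (Int.mul_ediv_add_emod _ _).symm
    have hrb : b*k = c*(b*k/c) + b*k % c := (Int.mul_ediv_add_emod _ _).symm
    have hrac : a*k % c < c := Int.emod_lt_of_pos _ hc0
    have hrbc : b*k % c < c := Int.emod_lt_of_pos _ hc0
    have hint : (![((a*k/c + 1 : ℤ):ℝ), ((b*k/c + 1 : ℤ):ℝ), ((k:ℤ):ℝ)]) ∈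
        interior (Tet a b c) := by
      rw [mem_interior_Tet hc0]
      simp only [Matrix.cons_val_zero, Matrix.cons_val_one, Matrix.head_cons,
        Matrix.cons_val_two, Matrix.tail_cons]
      refine ⟨by exact_mod_cast hk1.trans_lt' (by omega), ?_, ?_, ?_⟩
      · have : a*k < c*(a*k/c + 1) := by
          have e : c*(a*k/c + 1) = c*(a*k/c) + c := by ring
          omega
        exact_mod_cast this
      · have : b*k < c*(b*k/c + 1) := by
          have e : c*(b*k/c + 1) = c*(b*k/c) + c := by ring
          omega
        exact_mod_cast this
      · have : c*((a*k/c + 1) + (b*k/c + 1)) < c + (a+b-1)*k := by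
          have e : c*((a*k/c + 1) + (b*k/c + 1)) = c*(a*k/c) + c*(b*k/c) + 2*c := by ring
          have e2 : (a+b-1)*k = a*k + b*k - k := by ring
          omega
        exact_mod_cast this
    have hv := hemp _ (interior_subset hint) (lattice_pt _ _ _)
    exact vertex_cases hc hk1 hk2 hv
  · -- residue condition implies Empty
    intro hstar p hp hlat
    obtain ⟨x, hx⟩ := hlat 0
    obtain ⟨y, hy⟩ := hlat 1
    obtain ⟨z, hz⟩ := hlat 2
    have hpeq : p = ![(x:ℝ), (y:ℝ), (z:ℝ)] := by
      funext j
      fin_cases j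
      · exact hx
      · exact hy
      · exact hz
    rw [hpeq] at hp ⊢
    by_cases hint : (![(x:ℝ), (y:ℝ), (z:ℝ)]) ∈ interior (Tet a b c)
    · exfalso
      rw [mem_interior_Tet hc0] at hint
      simp only [Matrix.cons_val_zero, Matrix.cons_val_one, Matrix.head_cons,
        Matrix.cons_val_two, Matrix.tail_cons] at hint
      obtain ⟨s1, s2, s3, s4⟩ := hint
      have hz1 : 0 < z := by exact_mod_cast s1
      have h2 : a*z < c*x := by exact_mod_cast s2
      have h3 : b*z < c*y := by exact_mod_cast s3
      have h4 : c*(x+y) < c + (a+b-1)*z := by exact_mod_cast s4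
      have e0 : c*(x+y) = c*x + c*y := by ring
      have e1 : (a+b-1)*z = a*z + b*z - z := by ring
      have hzc : z < c := by linarith
      have hra : a*z = c*(a*z/c) + a*z % c := (Int.mul_ediv_add_emod _ _).symm
      have hrb : b*z = c*(b*z/c) + b*z % c := (Int.mul_ediv_add_emod _ _).symm
      have hra0 : 0 ≤ a*z % c := Int.emod_nonneg _ (by omega)
      have hrb0 : 0 ≤ b*z % c := Int.emod_nonneg _ (by omega)
      have hxx : a*z/c + 1 ≤ x := by
        have h : c*(a*z/c) < c*x := by omega
        have := lt_of_mul_lt_mul_left h (by omega : (0:ℤ) ≤ c)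
        omega
      have hyy : b*z/c + 1 ≤ y := by
        have h : c*(b*z/c) < c*y := by omega
        have := lt_of_mul_lt_mul_left h (by omega : (0:ℤ) ≤ c)
        omega
      have hstar' := hstar z (by omega) (by omega)
      have e2 : c*((a*z/c + 1) + (b*z/c + 1)) ≤ c*(x+y) :=
        mul_le_mul_of_nonneg_left (by omega) (by omega : (0:ℤ) ≤ c)
      have e3 : c*((a*z/c + 1) + (b*z/c + 1)) = c*(a*z/c) + c*(b*z/c) + 2*c := by ring
      omega
    · have hfr : (![(x:ℝ), (y:ℝ), (z:ℝ)]) ∈ frontier (Tet a b c) := by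
        rw [frontier]
        exact ⟨subset_closure hp, hint⟩
      exact hclean _ hfr (lattice_pt x y z)
end

section
/- Let c > 1 be an integer and let a, b be integers with 0 < a, b < c and gcd(a,c) = gcd(b,c) = 1. Then the points of ℤ³ lying in the open parallelepiped {s(1,0,0) + t(0,1,0) + u(a,b,c) : 0 < s, t, u < 1} are exactly the c−1 points ⟨k(c−a)/c⟩(1,0,0) + ⟨k(c−b)/c⟩(0,1,0) + (k/c)(a,b,c) for k = 1, ..., c−1, where ⟨x⟩ = x − ⌊x⌋ denotes the fractional part. -/
/-- The open parallelepiped spanned by `(1,0,0)`, `(0,1,0)`, `(a,b,c)`. -/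
def OpenPar (a b c : ℤ) : Set (Fin 3 → ℝ) :=
  {x | ∃ s t u : ℝ, 0 < s ∧ s < 1 ∧ 0 < t ∧ t < 1 ∧ 0 < u ∧ u < 1 ∧
    x = s • ![1, 0, 0] + t • ![0, 1, 0] + u • ![(a : ℝ), (b : ℝ), (c : ℝ)]}

/-- The point `⟨k(c-a)/c⟩ (1,0,0) + ⟨k(c-b)/c⟩ (0,1,0) + (k/c) (a,b,c)`, where `⟨·⟩`
denotes the fractional part. -/
noncomputable def latPoint (a b c k : ℤ) : Fin 3 → ℝ :=
  Int.fract ((k * (c - a) : ℤ) / (c : ℝ)) • ![1, 0, 0] +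
    Int.fract ((k * (c - b) : ℤ) / (c : ℝ)) • ![0, 1, 0] +
    ((k : ℝ) / (c : ℝ)) • ![(a : ℝ), (b : ℝ), (c : ℝ)]

lemma latPoint_apply0 (a b c k : ℤ) :
    latPoint a b c k 0 = Int.fract ((k * (c - a) : ℤ) / (c : ℝ)) + (k : ℝ) / c * a := by
  simp [latPoint]

lemma latPoint_apply1 (a b c k : ℤ) :
    latPoint a b c k 1 = Int.fract ((k * (c - b) : ℤ) / (c : ℝ)) + (k : ℝ) / c * b := by
  simp [latPoint]

lemma latPoint_apply2 (a b c k : ℤ) (hc : (c : ℝ) ≠ 0) :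
    latPoint a b c k 2 = (k : ℝ) := by
  simp [latPoint]
  field_simp

lemma fract_pos_of_not_dvd {m c : ℤ} (hc : 0 < c) (h : ¬ c ∣ m) :
    0 < Int.fract ((m : ℝ) / (c : ℝ)) := by
  lift c to ℕ using hc.le with n
  rw [Int.cast_natCast, Int.fract_div_intCast_eq_div_intCast_mod]
  apply div_pos
  · have h0 : m % (n : ℤ) ≠ 0 := fun h0 => h (Int.dvd_of_emod_eq_zero h0)
    have hnn : 0 ≤ m % (n : ℤ) := Int.emod_nonneg m (by exact_mod_cast hc.ne')
    exact_mod_cast lt_of_le_of_ne hnn (Ne.symm h0)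
  · exact_mod_cast hc

/-- If `c > 1`, `0 < a, b < c` and `gcd(a,c) = gcd(b,c) = 1`, then the points of `ℤ³` lying
in the open parallelepiped `{s(1,0,0) + t(0,1,0) + u(a,b,c) : 0 < s, t, u < 1}` are exactly
the `c - 1` distinct points `⟨k(c-a)/c⟩ (1,0,0) + ⟨k(c-b)/c⟩ (0,1,0) + (k/c)(a,b,c)` for
`k = 1, ..., c-1`. -/
theorem stmt_18 (a b c : ℤ) (hc : 1 < c) (ha : 0 < a) (hac : a < c) (hb : 0 < b)
    (hbc : b < c) (hga : Int.gcd a c = 1) (hgb : Int.gcd b c = 1) :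
    ({x : Fin 3 → ℝ | x ∈ OpenPar a b c ∧ IsLatticePt x} =
        (fun k => latPoint a b c k) '' (Set.Icc 1 (c - 1))) ∧
      Set.InjOn (fun k => latPoint a b c k) (Set.Icc 1 (c - 1)) := by
  have hcR : (0 : ℝ) < (c : ℝ) := by exact_mod_cast (by omega : (0:ℤ) < c)
  have hcne : (c : ℝ) ≠ 0 := ne_of_gt hcR
  have hcopa : IsCoprime (c : ℤ) (c - a) := by
    have : IsCoprime a c := Int.isCoprime_iff_gcd_eq_one.2 hga
    have : IsCoprime c a := this.symm
    have h2 := this.neg_right.add_mul_left_right 1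
    simpa [add_comm, ← sub_eq_add_neg] using h2
  have hcopb : IsCoprime (c : ℤ) (c - b) := by
    have : IsCoprime b c := Int.isCoprime_iff_gcd_eq_one.2 hgb
    have : IsCoprime c b := this.symm
    have h2 := this.neg_right.add_mul_left_right 1
    simpa [add_comm, ← sub_eq_add_neg] using h2
  constructor
  · ext x
    simp only [Set.mem_setOf_eq, Set.mem_image, Set.mem_Icc]
    constructor
    · rintro ⟨⟨s, t, u, hs0, hs1, ht0, ht1, hu0, hu1, hx⟩, hlat⟩
      have hx0 : x 0 = s + u * a := by rw [hx]; simp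
      have hx1 : x 1 = t + u * b := by rw [hx]; simp
      have hx2 : x 2 = u * c := by rw [hx]; simp
      obtain ⟨k, hk⟩ := hlat 2
      obtain ⟨m0, hm0⟩ := hlat 0
      obtain ⟨m1, hm1⟩ := hlat 1
      have hu : u = (k : ℝ) / c := by
        field_simp
        rw [← hx2, hk]
      have hk0 : (0 : ℝ) < k := by
        rw [← hk, hx2]; positivity
      have hkc : (k : ℝ) < c := by
        rw [← hk, hx2]
        nlinarith
      have hki0 : (0 : ℤ) < k := by exact_mod_cast hk0
      have hkic : k < c := by exact_mod_cast hkc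
      refine ⟨k, ⟨by omega, by omega⟩, ?_⟩
      have hs : s = (m0 : ℝ) - k * a / c := by
        have := hm0; rw [hx0, hu] at this
        field_simp at this ⊢
        linarith
      have ht : t = (m1 : ℝ) - k * b / c := by
        have := hm1; rw [hx1, hu] at this
        field_simp at this ⊢
        linarith
      funext i
      fin_cases i
      · show latPoint a b c k 0 = x 0
        rw [latPoint_apply0, hx0, hu]
        have key : ((k * (c - a) : ℤ) : ℝ) / c = s + ((k - m0 : ℤ) : ℝ) := by
          rw [hs]; push_cast; field_simp; ring
        rw [key, Int.fract_add_intCast, Int.fract_eq_self.2 ⟨hs0.le, hs1⟩]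
      · show latPoint a b c k 1 = x 1
        rw [latPoint_apply1, hx1, hu]
        have key : ((k * (c - b) : ℤ) : ℝ) / c = t + ((k - m1 : ℤ) : ℝ) := by
          rw [ht]; push_cast; field_simp; ring
        rw [key, Int.fract_add_intCast, Int.fract_eq_self.2 ⟨ht0.le, ht1⟩]
      · show latPoint a b c k 2 = x 2
        rw [latPoint_apply2 _ _ _ _ hcne, hk]
    · rintro ⟨k, ⟨hk1, hk2⟩, rfl⟩
      have hndvd : ¬ (c ∣ k) := fun h => by
        have := Int.le_of_dvd (by omega) h; omega
      constructor
      · refine ⟨Int.fract ((k * (c - a) : ℤ) / (c : ℝ)),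
          Int.fract ((k * (c - b) : ℤ) / (c : ℝ)), (k : ℝ) / c,
          ?_, Int.fract_lt_one _, ?_, Int.fract_lt_one _, ?_, ?_, rfl⟩
        · apply fract_pos_of_not_dvd (by omega)
          exact fun h => hndvd (hcopa.dvd_of_dvd_mul_right h)
        · apply fract_pos_of_not_dvd (by omega)
          exact fun h => hndvd (hcopb.dvd_of_dvd_mul_right h)
        · apply div_pos _ hcR; exact_mod_cast by omega
        · rw [div_lt_one hcR]; exact_mod_cast by omega
      · intro i
        fin_cases i
        · refine ⟨k - ⌊((k * (c - a) : ℤ) : ℝ) / c⌋, ?_⟩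
          show latPoint a b c k 0 = _
          rw [latPoint_apply0, Int.fract]
          push_cast
          field_simp
          ring
        · refine ⟨k - ⌊((k * (c - b) : ℤ) : ℝ) / c⌋, ?_⟩
          show latPoint a b c k 1 = _
          rw [latPoint_apply1, Int.fract]
          push_cast
          field_simp
          ring
        · exact ⟨k, latPoint_apply2 _ _ _ _ hcne⟩
  · intro k1 _ k2 _ heq
    have h2 : latPoint a b c k1 2 = latPoint a b c k2 2 := congrFun heq 2
    rw [latPoint_apply2 _ _ _ _ hcne, latPoint_apply2 _ _ _ _ hcne] at h2
    exact_mod_cast h2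
end

section
/- Let c > 1 be an integer, let a, b be integers with 0 ≤ a, b < c, and suppose T_{a,b,c} is a clean lattice tetrahedron. Then T_{a,b,c} is empty if and only if for every integer k with 1 ≤ k ≤ c−1, 1 < ⟨k(c−a)/c⟩ + ⟨k(c−b)/c⟩ + k/c < 2, where ⟨x⟩ = x − ⌊x⌋ denotes the fractional part. -/
lemma mem_tet_iff (a b c : ℤ) (hc : (0:ℝ) < c) (x : Fin 3 → ℝ) :
    x ∈ (convexHull ℝ {![0,0,0], ![1,0,0], ![0,1,0], ![(a : ℝ), (b : ℝ), (c : ℝ)]} :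
      Set (Fin 3 → ℝ)) ↔
    0 ≤ x 2 ∧ (a:ℝ) * x 2 ≤ c * x 0 ∧ (b:ℝ) * x 2 ≤ c * x 1 ∧
      c * x 0 + c * x 1 + (1 - a - b) * x 2 ≤ c := by
  constructor
  · intro hx
    have hsub : (convexHull ℝ {![0,0,0], ![1,0,0], ![0,1,0], ![(a : ℝ), (b : ℝ), (c : ℝ)]} :
        Set (Fin 3 → ℝ)) ⊆ {y : Fin 3 → ℝ | 0 ≤ y 2 ∧ (a:ℝ) * y 2 ≤ c * y 0 ∧
          (b:ℝ) * y 2 ≤ c * y 1 ∧ c * y 0 + c * y 1 + (1 - a - b) * y 2 ≤ c} := by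
      have hcz : (0:ℤ) ≤ c := by exact_mod_cast hc.le
      apply convexHull_min
      · intro y hy
        simp only [Set.mem_insert_iff, Set.mem_singleton_iff] at hy
        rcases hy with rfl | rfl | rfl | rfl <;>
          refine ⟨?_, ?_, ?_, ?_⟩ <;> simp <;> first | exact hcz | nlinarith
      · intro u hu v hv s t hs ht hst
        simp only [Set.mem_setOf_eq, Pi.add_apply, Pi.smul_apply, smul_eq_mul] at *
        refine ⟨?_, ?_, ?_, ?_⟩ <;> nlinarith [hu.1, hu.2.1, hu.2.2.1, hu.2.2.2,
          hv.1, hv.2.1, hv.2.2.1, hv.2.2.2]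
    exact hsub hx
  · rintro ⟨h1, h2, h3, h4⟩
    have hc0 : (c:ℝ) ≠ 0 := ne_of_gt hc
    set l1 : ℝ := x 0 - a * x 2 / c with hl1
    set l2 : ℝ := x 1 - b * x 2 / c with hl2
    set l3 : ℝ := x 2 / c with hl3
    have hl1n : 0 ≤ l1 := by rw [hl1, sub_nonneg, div_le_iff₀ hc]; nlinarith
    have hl2n : 0 ≤ l2 := by rw [hl2, sub_nonneg, div_le_iff₀ hc]; nlinarith
    have hl3n : 0 ≤ l3 := by rw [hl3]; positivity
    have hsum : l1 + l2 + l3 ≤ 1 := by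
      have key : l1 + l2 + l3 = (c * x 0 + c * x 1 + (1 - (a:ℝ) - b) * x 2) / c := by
        rw [hl1, hl2, hl3]; field_simp; ring
      rw [key, div_le_one hc]; exact h4
    have hxeq : x = ∑ i : Fin 4,
        (![1 - l1 - l2 - l3, l1, l2, l3] i) • (![![0,0,0], ![1,0,0], ![0,1,0],
          ![(a : ℝ), (b : ℝ), (c : ℝ)]] i) := by
      funext j
      simp only [Fin.sum_univ_four]
      fin_cases j <;>
        · simp [hl1, hl2, hl3]
          field_simp
          try ring
    rw [hxeq]
    apply (convex_convexHull ℝ _).sum_mem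
    · intro i _
      fin_cases i
      · simpa using by linarith
      · simpa using hl1n
      · simpa using hl2n
      · simpa using hl3n
    · simp [Fin.sum_univ_four]; ring
    · intro i _
      apply subset_convexHull
      fin_cases i <;> simp

lemma fract_eq_ceil (a c k : ℤ) (hc : (0:ℝ) < c) :
    Int.fract (((k * (c - a) : ℤ) : ℝ) / c) =
      ((⌈((k:ℝ) * a) / c⌉ : ℤ) : ℝ) - ((k:ℝ) * a) / c := by
  have hcne : (c:ℝ) ≠ 0 := ne_of_gt hc
  have h1 : ((k * (c - a) : ℤ) : ℝ) / c = -(((k:ℝ) * a) / c) + (k : ℤ) := by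
    push_cast; field_simp; ring
  rw [h1, Int.fract_add_intCast, Int.fract, Int.floor_neg]
  push_cast; ring

lemma fract_flip (a c k : ℤ) (hc : (0:ℝ) < c) :
    Int.fract ((((c - k) * (c - a) : ℤ) : ℝ) / c) = Int.fract (((k:ℝ) * a) / c) := by
  have hcne : (c:ℝ) ≠ 0 := ne_of_gt hc
  have h1 : (((c - k) * (c - a) : ℤ) : ℝ) / c = ((k:ℝ) * a) / c + ((c - k - a : ℤ) : ℝ) := by
    push_cast; field_simp; ring
  rw [h1, Int.fract_add_intCast]

lemma fract_as_neg (a c k : ℤ) (hc : (0:ℝ) < c) :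
    Int.fract (((k * (c - a) : ℤ) : ℝ) / c) = Int.fract (-(((k:ℝ) * a) / c)) := by
  have hcne : (c:ℝ) ≠ 0 := ne_of_gt hc
  have h1 : ((k * (c - a) : ℤ) : ℝ) / c = -(((k:ℝ) * a) / c) + (k : ℤ) := by
    push_cast; field_simp; ring
  rw [h1, Int.fract_add_intCast]


set_option maxHeartbeats 1000000 in
/-- Let `c > 1`, `0 ≤ a, b < c`, and suppose `T_{a,b,c}` is a clean lattice tetrahedron.
Then `T_{a,b,c}` is empty if and only if `1 < ⟨k(c-a)/c⟩ + ⟨k(c-b)/c⟩ + k/c < 2` for every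
integer `k` with `1 ≤ k ≤ c - 1`, where `⟨x⟩` denotes the fractional part. -/
theorem stmt_19 (a b c : ℤ) (hc : 1 < c) (ha : 0 ≤ a) (hac : a < c) (hb : 0 ≤ b)
    (hbc : b < c) (hclean : TetIsClean a b c) :
    TetIsEmpty a b c ↔
      ∀ k : ℤ, 1 ≤ k → k ≤ c - 1 →
        1 < Int.fract ((k * (c - a) : ℤ) / (c : ℝ)) +
              Int.fract ((k * (c - b) : ℤ) / (c : ℝ)) + (k : ℝ) / (c : ℝ) ∧
          Int.fract ((k * (c - a) : ℤ) / (c : ℝ)) +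
              Int.fract ((k * (c - b) : ℤ) / (c : ℝ)) + (k : ℝ) / (c : ℝ) < 2 := by
  have hc0 : (0:ℝ) < c := by exact_mod_cast (by linarith : (0:ℤ) < c)
  have hcne : (c:ℝ) ≠ 0 := ne_of_gt hc0
  constructor
  · intro hemp
    have low : ∀ k : ℤ, 1 ≤ k → k ≤ c - 1 →
        1 < Int.fract (((k * (c - a) : ℤ) : ℝ) / c) +
              Int.fract (((k * (c - b) : ℤ) : ℝ) / c) + (k : ℝ) / c := by
      intro k hk1 hk2
      by_contra hle
      push_neg at hle
      rw [fract_eq_ceil a c k hc0, fract_eq_ceil b c k hc0] at hle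
      set m : ℤ := ⌈((k:ℝ) * a) / c⌉ with hm
      set n : ℤ := ⌈((k:ℝ) * b) / c⌉ with hn
      set P : Fin 3 → ℝ := ![(m:ℝ), (n:ℝ), (k:ℝ)] with hP
      have hma : (k:ℝ) * a ≤ c * m := by
        have h := Int.le_ceil (((k:ℝ) * a) / c)
        rw [div_le_iff₀ hc0] at h; rw [← hm] at h; nlinarith
      have hmb : (k:ℝ) * b ≤ c * n := by
        have h := Int.le_ceil (((k:ℝ) * b) / c)
        rw [div_le_iff₀ hc0] at h; rw [← hn] at h; nlinarith
      have hsum : (c:ℝ) * m + c * n + (1 - a - b) * k ≤ c := by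
        have expand : (c:ℝ) * (((m:ℝ) - (k:ℝ) * a / c) + ((n:ℝ) - (k:ℝ) * b / c) + (k:ℝ)/c)
            = c * m - k * a + c * n - k * b + k := by field_simp; ring
        have h6 := mul_le_mul_of_nonneg_left hle hc0.le
        rw [expand] at h6
        nlinarith
      have hmem : P ∈ Tet a b c := by
        rw [Tet, mem_tet_iff a b c hc0]
        have e0 : P 0 = (m:ℝ) := rfl
        have e1 : P 1 = (n:ℝ) := rfl
        have e2 : P 2 = (k:ℝ) := rfl
        rw [e0, e1, e2]
        refine ⟨?_, ?_, ?_, ?_⟩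
        · exact_mod_cast (by linarith : (0:ℤ) ≤ k)
        · nlinarith
        · nlinarith
        · linarith
      have hlat : IsLatticePt P := by
        intro i
        fin_cases i
        · exact ⟨m, rfl⟩
        · exact ⟨n, rfl⟩
        · exact ⟨k, rfl⟩
      rcases hemp P hmem hlat with h | h | h | h <;>
        · have h2 := congrFun h 2
          simp only [hP, Matrix.cons_val_two, Matrix.tail_cons, Matrix.head_cons] at h2
          first
          | (have : k = 0 := by exact_mod_cast h2
             omega)
          | (have : k = c := by exact_mod_cast h2
             omega)
    intro k hk1 hk2
    refine ⟨low k hk1 hk2, ?_⟩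
    have fa_lt : Int.fract (((k * (c - a) : ℤ) : ℝ) / c) < 1 := Int.fract_lt_one _
    have fb_lt : Int.fract (((k * (c - b) : ℤ) : ℝ) / c) < 1 := Int.fract_lt_one _
    have fa_nn : 0 ≤ Int.fract (((k * (c - a) : ℤ) : ℝ) / c) := Int.fract_nonneg _
    have fb_nn : 0 ≤ Int.fract (((k * (c - b) : ℤ) : ℝ) / c) := Int.fract_nonneg _
    have hkc : (k:ℝ) / c < 1 := by
      rw [div_lt_one hc0]; exact_mod_cast (by omega : k < c)
    by_cases h0a : Int.fract (((k * (c - a) : ℤ) : ℝ) / c) = 0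
    · rw [h0a]; linarith
    by_cases h0b : Int.fract (((k * (c - b) : ℤ) : ℝ) / c) = 0
    · rw [h0b]; linarith
    have hlow := low (c - k) (by omega) (by omega)
    have e1 : Int.fract ((((c - k) * (c - a) : ℤ) : ℝ) / c)
        = 1 - Int.fract (((k * (c - a) : ℤ) : ℝ) / c) := by
      rw [fract_flip a c k hc0, fract_as_neg a c k hc0]
      rw [fract_as_neg a c k hc0] at h0a
      conv_lhs => rw [show ((k:ℝ) * a) / c = -(-(((k:ℝ) * a) / c)) by ring]
      exact Int.fract_neg h0a
    have e2 : Int.fract ((((c - k) * (c - b) : ℤ) : ℝ) / c)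
        = 1 - Int.fract (((k * (c - b) : ℤ) : ℝ) / c) := by
      rw [fract_flip b c k hc0, fract_as_neg b c k hc0]
      rw [fract_as_neg b c k hc0] at h0b
      conv_lhs => rw [show ((k:ℝ) * b) / c = -(-(((k:ℝ) * b) / c)) by ring]
      exact Int.fract_neg h0b
    rw [e1, e2] at hlow
    have e3 : (((c - k : ℤ)):ℝ) / c = 1 - (k:ℝ)/c := by push_cast; field_simp
    rw [e3] at hlow
    linarith
  · intro hS x hx hlat
    obtain ⟨p, hp⟩ := hlat 0
    obtain ⟨q, hq⟩ := hlat 1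
    obtain ⟨r, hr⟩ := hlat 2
    rw [Tet, mem_tet_iff a b c hc0] at hx
    obtain ⟨h1, h2, h3, h4⟩ := hx
    rw [hr] at h1
    rw [hp, hr] at h2
    rw [hq, hr] at h3
    rw [hp, hq, hr] at h4
    have hr0 : (0:ℤ) ≤ r := by exact_mod_cast h1
    have h2' : a * r ≤ c * p := by exact_mod_cast h2
    have h3' : b * r ≤ c * q := by exact_mod_cast h3
    have h4' : c * p + c * q + (1 - a - b) * r ≤ c := by
      have := h4; push_cast at this; exact_mod_cast this
    have hrc : r ≤ c := by nlinarith
    by_cases hc1 : r = 0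
    · subst hc1
      have hp0 : 0 ≤ p := by nlinarith
      have hq0 : 0 ≤ q := by nlinarith
      have hpq : p + q ≤ 1 := by nlinarith
      have : (p = 0 ∧ q = 0) ∨ (p = 1 ∧ q = 0) ∨ (p = 0 ∧ q = 1) := by omega
      rcases this with ⟨rfl, rfl⟩ | ⟨rfl, rfl⟩ | ⟨rfl, rfl⟩
      · left; funext i; fin_cases i <;> simp [hp, hq, hr]
      · right; left; funext i; fin_cases i <;> simp [hp, hq, hr]
      · right; right; left; funext i; fin_cases i <;> simp [hp, hq, hr]
    by_cases hc2 : r = c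
    · subst hc2
      have hpa : a ≤ p := by nlinarith
      have hqb : b ≤ q := by nlinarith
      have hpq : p = a ∧ q = b := by constructor <;> nlinarith
      obtain ⟨rfl, rfl⟩ := hpq
      right; right; right; funext i; fin_cases i <;> simp [hp, hq, hr]
    -- middle case: contradiction
    exfalso
    have hr1 : 1 ≤ r := by omega
    have hr2 : r ≤ c - 1 := by omega
    have hlow := (hS r hr1 hr2).1
    rw [fract_eq_ceil a c r hc0, fract_eq_ceil b c r hc0] at hlow
    set m : ℤ := ⌈((r:ℝ) * a) / c⌉ with hm
    set n : ℤ := ⌈((r:ℝ) * b) / c⌉ with hn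
    have hmp : m ≤ p := by
      rw [hm]
      refine Int.ceil_le.mpr ?_
      rw [div_le_iff₀ hc0]
      nlinarith [h2]
    have hnq : n ≤ q := by
      rw [hn]
      refine Int.ceil_le.mpr ?_
      rw [div_le_iff₀ hc0]
      nlinarith [h3]
    have hmpr : (m:ℝ) ≤ (p:ℝ) := by exact_mod_cast hmp
    have hnqr : (n:ℝ) ≤ (q:ℝ) := by exact_mod_cast hnq
    have expand : (c:ℝ) * (((m:ℝ) - (r:ℝ) * a / c) + ((n:ℝ) - (r:ℝ) * b / c) + (r:ℝ)/c)
        = c * m - r * a + c * n - r * b + r := by field_simp; ring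
    have h6 := mul_lt_mul_of_pos_left hlow hc0
    rw [expand] at h6
    have h4r : (c:ℝ) * p + c * q + (1 - a - b) * r ≤ c := h4
    nlinarith
end
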